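/- Let Λ be a k-graph with a pseudo free self-similar action of a group G. Call a subset U ⊆ Λ^∞ invariant if for all g ∈ G, μ, ν ∈ Λ with s(μ) = g·s(ν) and all x ∈ s(ν)Λ^∞, νx ∈ U implies μ(g·x) ∈ U. Then the only invariant subsets of Λ^∞ that are open in the cylinder-set topology are ∅ and Λ^∞ if and only if Λ is G-cofinal. (Equivalently: the self-similar path groupoid G_{G,Λ} is minimal if and only if Λ is G-cofinal.) -/

import Mathlib

namespace SSKG

/-- `ℕ^k`. -/
abbrev NK (k : ℕ) := Fin k → ℕ
/-- `ℤ^k`. -/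
abbrev ZK (k : ℕ) := Fin k → ℤ

lemma le0 {k : ℕ} (p : NK k) : 0 ≤ p := Pi.le_def.mpr fun i => Nat.zero_le (p i)

/-- A (row-finite, source-free, countable) `k`-graph: a countable small category with a
degree functor `d` into `ℕ^k` satisfying the unique factorization property. -/
structure KGraph (k : ℕ) where
  Obj : Type
  Mor : Type
  countable_mor : Countable Mor
  r : Mor → Obj
  s : Mor → Obj
  d : Mor → NK k
  ofObj : Obj → Mor
  comp : (μ ν : Mor) → s μ = r ν → Mor
  r_ofObj : ∀ v, r (ofObj v) = v
  s_ofObj : ∀ v, s (ofObj v) = v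
  d_ofObj : ∀ v, d (ofObj v) = 0
  eq_ofObj_of_d_eq_zero : ∀ μ, d μ = 0 → ∃ v, μ = ofObj v
  r_comp : ∀ μ ν h, r (comp μ ν h) = r μ
  s_comp : ∀ μ ν h, s (comp μ ν h) = s ν
  d_comp : ∀ μ ν h, d (comp μ ν h) = d μ + d ν
  comp_ofObj : ∀ μ (h : s μ = r (ofObj (s μ))), comp μ (ofObj (s μ)) h = μ
  ofObj_comp : ∀ μ (h : s (ofObj (r μ)) = r μ), comp (ofObj (r μ)) μ h = μ
  comp_assoc : ∀ μ ν ρ (h₁ : s μ = r ν) (h₂ : s ν = r ρ),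
      comp (comp μ ν h₁) ρ ((s_comp μ ν h₁).trans h₂)
        = comp μ (comp ν ρ h₂) (h₁.trans (r_comp ν ρ h₂).symm)
  factor_exists : ∀ μ (n m : NK k), d μ = n + m →
      ∃ (α β : Mor) (h : s α = r β), d α = n ∧ d β = m ∧ comp α β h = μ
  factor_unique : ∀ (α β α' β' : Mor) (h : s α = r β) (h' : s α' = r β'),
      d α = d α' → comp α β h = comp α' β' h' → α = α' ∧ β = β'
  row_finite : ∀ (v : Obj) (n : NK k), {μ : Mor | r μ = v ∧ d μ = n}.Finite
  no_sources : ∀ (v : Obj) (n : NK k), ∃ μ : Mor, r μ = v ∧ d μ = n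

lemma KGraph.comp_congr {k : ℕ} (Λ : KGraph k) {μ ν ν' : Λ.Mor} (hν : ν = ν')
    (h : Λ.s μ = Λ.r ν) (h' : Λ.s μ = Λ.r ν') : Λ.comp μ ν h = Λ.comp μ ν' h' := by
  cases hν; rfl

/-- An edge: a morphism of degree `e_i` for some `i`. -/
def IsEdge {k : ℕ} (Λ : KGraph k) (μ : Λ.Mor) : Prop := ∃ i : Fin k, Λ.d μ = Pi.single i 1

/-- Membership in `Λ⁰ ∪ Λᵉ` (a vertex or an edge). -/
def VorE {k : ℕ} (Λ : KGraph k) (μ : Λ.Mor) : Prop := Λ.d μ = 0 ∨ IsEdge Λ μ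

/-- A self-similar action of a group `G` on a `k`-graph `Λ`: an action by degree-,
range- and source-preserving automorphisms, together with a restriction map
`(g, μ) ↦ g|_μ` satisfying the Exel–Pardo style axioms. -/
structure SelfSimilar (k : ℕ) (G : Type) [Group G] (Λ : KGraph k) where
  act : G → Λ.Mor → Λ.Mor
  res : G → Λ.Mor → G
  act_one : ∀ μ, act 1 μ = μ
  act_mul : ∀ g h μ, act (g * h) μ = act g (act h μ)
  act_d : ∀ g μ, Λ.d (act g μ) = Λ.d μ
  act_ofObj_r : ∀ g μ, act g (Λ.ofObj (Λ.r μ)) = Λ.ofObj (Λ.r (act g μ))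
  act_ofObj_s : ∀ g μ, act g (Λ.ofObj (Λ.s μ)) = Λ.ofObj (Λ.s (act g μ))
  compat : ∀ g μ ν (h : Λ.s μ = Λ.r ν), Λ.s (act g μ) = Λ.r (act (res g μ) ν)
  act_comp : ∀ g μ ν (h : Λ.s μ = Λ.r ν),
      act g (Λ.comp μ ν h) = Λ.comp (act g μ) (act (res g μ) ν) (compat g μ ν h)
  res_ofObj : ∀ g v, res g (Λ.ofObj v) = g
  res_comp : ∀ g μ ν (h : Λ.s μ = Λ.r ν), res g (Λ.comp μ ν h) = res (res g μ) ν
  res_one : ∀ μ, res 1 μ = 1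
  res_mul : ∀ g h μ, res (g * h) μ = res g (act h μ) * res h μ

variable {k : ℕ} {G : Type} [Group G] {Λ : KGraph k}

/-- The induced action of `G` on the vertices `Λ⁰`. -/
def SelfSimilar.actV (S : SelfSimilar k G Λ) (g : G) (v : Λ.Obj) : Λ.Obj :=
  Λ.s (S.act g (Λ.ofObj v))

/-- The action is pseudo free. -/
def SelfSimilar.PseudoFree (S : SelfSimilar k G Λ) : Prop :=
  ∀ (g : G) (μ : Λ.Mor), S.act g μ = μ → S.res g μ = 1 → g = 1

/-- An infinite path in `Λ`: a degree-preserving functor `Ω_k → Λ`, recorded through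
its segments `x(p,q)` for `p ≤ q`. -/
structure InfPath {k : ℕ} (Λ : KGraph k) where
  seg : ∀ p q : NK k, p ≤ q → Λ.Mor
  d_seg : ∀ p q (h : p ≤ q), Λ.d (seg p q h) = fun i => q i - p i
  src_seg : ∀ p q m (h₁ : p ≤ q) (h₂ : q ≤ m), Λ.s (seg p q h₁) = Λ.r (seg q m h₂)
  comp_seg : ∀ p q m (h₁ : p ≤ q) (h₂ : q ≤ m),
      Λ.comp (seg p q h₁) (seg q m h₂) (src_seg p q m h₁ h₂) = seg p m (h₁.trans h₂)

lemma InfPath.ext' {x y : InfPath Λ} (h : x.seg = y.seg) : x = y := by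
  cases x; cases y; cases h; rfl

/-- The shift `σ^p(x)`. -/
def InfPath.shift (x : InfPath Λ) (p : NK k) : InfPath Λ where
  seg m n h := x.seg (m + p) (n + p) (add_le_add_left h p)
  d_seg m n h := by
    rw [x.d_seg]; funext i; simp only [Pi.add_apply]; omega
  src_seg m n l h₁ h₂ := x.src_seg _ _ _ _ _
  comp_seg m n l h₁ h₂ := x.comp_seg _ _ _ _ _

/-- The action of `G` on infinite paths: `(g·x)(p,q) = g|_{x(0,p)} · x(p,q)`. -/
def SelfSimilar.actInf (S : SelfSimilar k G Λ) (g : G) (x : InfPath Λ) : InfPath Λ where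
  seg p q h := S.act (S.res g (x.seg 0 p (le0 p))) (x.seg p q h)
  d_seg p q h := by rw [S.act_d, x.d_seg]
  src_seg p q m h₁ h₂ := by
    have key : S.res g (x.seg 0 q (le0 q))
        = S.res (S.res g (x.seg 0 p (le0 p))) (x.seg p q h₁) := by
      rw [← S.res_comp g (x.seg 0 p (le0 p)) (x.seg p q h₁) (x.src_seg 0 p q (le0 p) h₁),
        x.comp_seg 0 p q (le0 p) h₁]
    beta_reduce
    rw [key]
    exact S.compat _ _ _ (x.src_seg p q m h₁ h₂)
  comp_seg p q m h₁ h₂ := by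
    have key : S.res g (x.seg 0 q (le0 q))
        = S.res (S.res g (x.seg 0 p (le0 p))) (x.seg p q h₁) := by
      rw [← S.res_comp g (x.seg 0 p (le0 p)) (x.seg p q h₁) (x.src_seg 0 p q (le0 p) h₁),
        x.comp_seg 0 p q (le0 p) h₁]
    beta_reduce
    rw [← x.comp_seg p q m h₁ h₂, S.act_comp]
    exact Λ.comp_congr (by rw [key]) _ _

/-- The restriction cocycle `g|_x : ℕ^k → G`, `g|_x(p) = g|_{x(0,p)}`. -/
def SelfSimilar.resInf (S : SelfSimilar k G Λ) (g : G) (x : InfPath Λ) : NK k → G :=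
  fun p => S.res g (x.seg 0 p (le0 p))

/-- `IsConcat μ x y` says that `y = μx`, the concatenation of the finite path `μ`
(with `x(0,0) = s(μ)`) and the infinite path `x`. -/
def IsConcat (Λ : KGraph k) (μ : Λ.Mor) (x y : InfPath Λ) : Prop :=
  x.seg 0 0 le_rfl = Λ.ofObj (Λ.s μ) ∧
  y.seg 0 (Λ.d μ) (le0 _) = μ ∧
  ∀ m n (h : m ≤ n), y.seg (Λ.d μ + m) (Λ.d μ + n) (add_le_add_right h _) = x.seg m n h

/-- The cylinder set `Z(μ)`. -/
def cylinder (Λ : KGraph k) (μ : Λ.Mor) : Set (InfPath Λ) :=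
  {x : InfPath Λ | x.seg 0 (Λ.d μ) (le0 _) = μ}

/-- The cylinder-set topology on `Λ^∞`. -/
instance instTopInfPath (Λ : KGraph k) : TopologicalSpace (InfPath Λ) :=
  TopologicalSpace.generateFrom {U | ∃ μ : Λ.Mor, U = cylinder Λ μ}

/-- `Λ` is `G`-cofinal. -/
def GCofinal (S : SelfSimilar k G Λ) : Prop :=
  ∀ (x : InfPath Λ) (v : Λ.Obj), ∃ (p : NK k) (μ : Λ.Mor) (g : G),
    Λ.ofObj (Λ.s μ) = x.seg p p le_rfl ∧ Λ.r μ = S.actV g v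

/-- `Λ` is `G`-aperiodic. -/
def GAperiodic (S : SelfSimilar k G Λ) : Prop :=
  ∀ v : Λ.Obj, ∃ x : InfPath Λ, x.seg 0 0 le_rfl = Λ.ofObj v ∧
    ∀ (g : G) (p q : NK k), g ≠ 1 ∨ p ≠ q → x.shift p ≠ S.actInf g (x.shift q)

/-- A subset `U ⊆ Λ^∞` is invariant for the self-similar action. -/
def InvariantSet (S : SelfSimilar k G Λ) (U : Set (InfPath Λ)) : Prop :=
  ∀ (g : G) (μ ν : Λ.Mor) (x z y : InfPath Λ),
    Λ.s μ = S.actV g (Λ.s ν) → IsConcat Λ ν x z → IsConcat Λ μ (S.actInf g x) y →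
    z ∈ U → y ∈ U

/-- The minimal common extensions `Λ^min(μ,ν)`. -/
def Lmin (Λ : KGraph k) (μ ν : Λ.Mor) : Set (Λ.Mor × Λ.Mor) :=
  {p | ∃ (h₁ : Λ.s μ = Λ.r p.1) (h₂ : Λ.s ν = Λ.r p.2),
      Λ.comp μ p.1 h₁ = Λ.comp ν p.2 h₂ ∧ Λ.d (Λ.comp μ p.1 h₁) = Λ.d μ ⊔ Λ.d ν}

/-- The group `C(ℕ^k, G)` of all functions `ℕ^k → G` under pointwise multiplication. -/
abbrev CkG (k : ℕ) (G : Type) [Group G] := NK k → G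

/-- The normal subgroup of eventually trivial functions. -/
def tailTrivial (k : ℕ) (G : Type) [Group G] : Subgroup (CkG k G) where
  carrier := {f | ∃ z : NK k, ∀ p, z ≤ p → f p = 1}
  one_mem' := ⟨0, fun _ _ => rfl⟩
  mul_mem' := by
    rintro f g ⟨z₁, h₁⟩ ⟨z₂, h₂⟩
    exact ⟨z₁ ⊔ z₂, fun p hp => by
      rw [Pi.mul_apply, h₁ p (le_trans le_sup_left hp), h₂ p (le_trans le_sup_right hp),
        one_mul]⟩
  inv_mem' := by
    rintro f ⟨z, h⟩
    exact ⟨z, fun p hp => by rw [Pi.inv_apply, h p hp, inv_one]⟩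

instance tailTrivialNormal (k : ℕ) (G : Type) [Group G] : (tailTrivial k G).Normal := by
  constructor
  rintro f ⟨z, hz⟩ g
  exact ⟨z, fun p hp => by
    simp only [Pi.mul_apply, Pi.inv_apply, hz p hp, mul_one, mul_inv_cancel]⟩

/-- The quotient group `Q(ℕ^k, G) = C(ℕ^k,G)/∼`. -/
abbrev QkG (k : ℕ) (G : Type) [Group G] := CkG k G ⧸ tailTrivial k G

/-- Coercion `ℕ^k → ℤ^k`. -/
def toZ {k : ℕ} (p : NK k) : ZK k := fun i => (p i : ℤ)

open scoped Classical in
/-- The translation `T_z` on functions `ℕ^k → G`, for `z ∈ ℤ^k`. -/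
noncomputable def transFun {k : ℕ} {G : Type} [Group G] (z : ZK k) (f : CkG k G) : CkG k G :=
  fun p => if (∀ i, z i ≤ (p i : ℤ)) then f (fun i => ((p i : ℤ) - z i).toNat) else 1

/-- The ambient space `Λ^∞ × (Q(ℕ^k,G) ⋊ ℤ^k) × Λ^∞` containing the self-similar
path groupoid (as a set). -/
abbrev Triple (k : ℕ) (G : Type) [Group G] (Λ : KGraph k) :=
  InfPath Λ × (QkG k G × ZK k) × InfPath Λ

/-- The basic set `Z(μ, g, ν)` of the self-similar path groupoid. -/
def Zset (S : SelfSimilar k G Λ) (μ : Λ.Mor) (g : G) (ν : Λ.Mor) : Set (Triple k G Λ) :=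
  {t | ∃ x y z : InfPath Λ, IsConcat Λ ν x z ∧ IsConcat Λ μ (S.actInf g x) y ∧
    t = (y, ((QuotientGroup.mk (transFun (toZ (Λ.d μ)) (S.resInf g x)) : QkG k G),
      toZ (Λ.d μ) - toZ (Λ.d ν)), z)}

/-- The family `B_{G,Λ}` of basic sets. -/
def BGL (S : SelfSimilar k G Λ) : Set (Set (Triple k G Λ)) :=
  {A | ∃ (μ ν : Λ.Mor) (g : G), Λ.s μ = S.actV g (Λ.s ν) ∧ A = Zset S μ g ν}

/-- The self-similar path groupoid `G_{G,Λ}` (as a set of triples). -/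
def Gpd (S : SelfSimilar k G Λ) : Set (Triple k G Λ) :=
  {t | ∃ (g : G) (μ ν : Λ.Mor), Λ.s μ = S.actV g (Λ.s ν) ∧ t ∈ Zset S μ g ν}

/-- The topology on `G_{G,Λ}` generated by the basic sets. -/
def gpdTop (S : SelfSimilar k G Λ) : TopologicalSpace {t : Triple k G Λ // t ∈ Gpd S} :=
  TopologicalSpace.generateFrom
    {A | ∃ (μ ν : Λ.Mor) (g : G), A = {t | (t : Triple k G Λ) ∈ Zset S μ g ν}}


/-! ### Auxiliary machinery -/

section Aux

lemma ofObj_inj {v w : Λ.Obj} (h : Λ.ofObj v = Λ.ofObj w) : v = w := by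
  have := congrArg Λ.r h; rwa [Λ.r_ofObj, Λ.r_ofObj] at this

lemma comp_congr' (Λ : KGraph k) {μ μ' ν : Λ.Mor} (hμ : μ = μ')
    (h : Λ.s μ = Λ.r ν) (h' : Λ.s μ' = Λ.r ν) : Λ.comp μ ν h = Λ.comp μ' ν h' := by
  cases hμ; rfl

lemma seg_congr (x : InfPath Λ) {p p' q q' : NK k} (hp : p = p') (hq : q = q')
    (h : p ≤ q) (h' : p' ≤ q') : x.seg p q h = x.seg p' q' h' := by
  cases hp; cases hq; rfl

lemma seg_pp (x : InfPath Λ) (p : NK k) (h : p ≤ p) :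
    x.seg p p h = Λ.ofObj (Λ.s (x.seg 0 p (le0 p))) := by
  obtain ⟨w, hw⟩ := Λ.eq_ofObj_of_d_eq_zero (x.seg p p h)
    (by rw [x.d_seg]; funext i; show p i - p i = 0; omega)
  have h2 := x.src_seg 0 p p (le0 p) h
  rw [hw, Λ.r_ofObj] at h2
  rw [hw, ← h2]

lemma seg_det {x y : InfPath Λ} {p q : NK k} (hpq : p ≤ q)
    (h : x.seg 0 q (le0 q) = y.seg 0 q (le0 q)) :
    x.seg 0 p (le0 p) = y.seg 0 p (le0 p) := by
  have hx := x.comp_seg 0 p q (le0 p) hpq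
  have hy := y.comp_seg 0 p q (le0 p) hpq
  refine (Λ.factor_unique _ _ _ _ _ _ ?_ (hx.trans (h.trans hy.symm))).1
  rw [x.d_seg, y.d_seg]

lemma s_act (S : SelfSimilar k G Λ) (g : G) (μ : Λ.Mor) :
    Λ.s (S.act g μ) = S.actV g (Λ.s μ) := by
  unfold SelfSimilar.actV
  rw [S.act_ofObj_s, Λ.s_ofObj]

lemma r_act (S : SelfSimilar k G Λ) (g : G) (μ : Λ.Mor) :
    Λ.r (S.act g μ) = S.actV g (Λ.r μ) := by
  unfold SelfSimilar.actV
  rw [S.act_ofObj_r, Λ.s_ofObj]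

lemma actV_one (S : SelfSimilar k G Λ) (v : Λ.Obj) : S.actV 1 v = v := by
  unfold SelfSimilar.actV
  rw [S.act_one, Λ.s_ofObj]

lemma actV_mul (S : SelfSimilar k G Λ) (g h : G) (v : Λ.Obj) :
    S.actV (g * h) v = S.actV g (S.actV h v) := by
  unfold SelfSimilar.actV
  rw [S.act_mul, S.act_ofObj_s, Λ.s_ofObj]

lemma res_seg00 (S : SelfSimilar k G Λ) (g : G) (x : InfPath Λ) (h : (0 : NK k) ≤ 0) :
    S.res g (x.seg 0 0 h) = g := by
  rw [seg_pp x 0 h]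
  exact S.res_ofObj g _

lemma actInf_one (S : SelfSimilar k G Λ) (x : InfPath Λ) : S.actInf 1 x = x := by
  apply InfPath.ext'
  funext p q h
  show S.act (S.res 1 _) _ = _
  rw [S.res_one, S.act_one]

lemma actInf_mul (S : SelfSimilar k G Λ) (g h : G) (x : InfPath Λ) :
    S.actInf (g * h) x = S.actInf g (S.actInf h x) := by
  apply InfPath.ext'
  funext p q hpq
  show S.act (S.res (g * h) (x.seg 0 p (le0 p))) (x.seg p q hpq)
      = S.act (S.res g ((S.actInf h x).seg 0 p (le0 p))) ((S.actInf h x).seg p q hpq)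
  have h1 : (S.actInf h x).seg 0 p (le0 p) = S.act h (x.seg 0 p (le0 p)) := by
    show S.act (S.res h (x.seg 0 0 (le0 0))) _ = _
    rw [res_seg00]
  have h2 : (S.actInf h x).seg p q hpq
      = S.act (S.res h (x.seg 0 p (le0 p))) (x.seg p q hpq) := rfl
  rw [h1, h2, S.res_mul, S.act_mul]

lemma actInf_inv_cancel (S : SelfSimilar k G Λ) (g : G) (x : InfPath Λ) :
    S.actInf g (S.actInf g⁻¹ x) = x := by
  rw [← actInf_mul, mul_inv_cancel, actInf_one]

/-- Build an infinite path from a compatible system of initial segments. -/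
noncomputable def ofSystem (A : NK k → Λ.Mor) (hd : ∀ q, Λ.d (A q) = q)
    (hext : ∀ p q : NK k, p ≤ q →
      ∃ (β : Λ.Mor) (hh : Λ.s (A p) = Λ.r β), Λ.comp (A p) β hh = A q) :
    InfPath Λ where
  seg p q h := (hext p q h).choose
  d_seg p q h := by
    obtain ⟨hh, hc⟩ := (hext p q h).choose_spec
    have hdc := Λ.d_comp (A p) _ hh
    rw [hc, hd, hd] at hdc
    funext i
    have h1 := congrFun hdc i
    have h2 : p i ≤ q i := h i
    simp only [Pi.add_apply] at h1
    beta_reduce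
    omega
  src_seg p q m h₁ h₂ := by
    obtain ⟨hh₁, hc₁⟩ := (hext p q h₁).choose_spec
    obtain ⟨hh₂, hc₂⟩ := (hext q m h₂).choose_spec
    have hs := Λ.s_comp (A p) _ hh₁
    rw [hc₁] at hs
    exact hs.symm.trans hh₂
  comp_seg p q m h₁ h₂ := by
    obtain ⟨hh₁, hc₁⟩ := (hext p q h₁).choose_spec
    obtain ⟨hh₂, hc₂⟩ := (hext q m h₂).choose_spec
    obtain ⟨hh₃, hc₃⟩ := (hext p m (h₁.trans h₂)).choose_spec
    have hsrc : Λ.s ((hext p q h₁).choose) = Λ.r ((hext q m h₂).choose) := by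
      have hs := Λ.s_comp (A p) _ hh₁
      rw [hc₁] at hs
      exact hs.symm.trans hh₂
    have e1 := Λ.comp_assoc (A p) _ _ hh₁ hsrc
    have e2 : Λ.comp (Λ.comp (A p) _ hh₁) ((hext q m h₂).choose)
        ((Λ.s_comp (A p) _ hh₁).trans hsrc) = A m := by
      exact (comp_congr' Λ hc₁ _ hh₂).trans hc₂
    have e3 := (e1.symm.trans e2).trans hc₃.symm
    exact (Λ.factor_unique (A p) _ (A p) _ _ _ rfl e3).2

lemma ofSystem_spec (A : NK k → Λ.Mor) (hd : ∀ q, Λ.d (A q) = q)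
    (hext : ∀ p q : NK k, p ≤ q →
      ∃ (β : Λ.Mor) (hh : Λ.s (A p) = Λ.r β), Λ.comp (A p) β hh = A q)
    (p q : NK k) (h : p ≤ q) :
    ∃ hh : Λ.s (A p) = Λ.r ((ofSystem A hd hext).seg p q h),
      Λ.comp (A p) ((ofSystem A hd hext).seg p q h) hh = A q :=
  (hext p q h).choose_spec

lemma ofSystem_seg_zero (A : NK k → Λ.Mor) (hd : ∀ q, Λ.d (A q) = q)
    (hext : ∀ p q : NK k, p ≤ q →
      ∃ (β : Λ.Mor) (hh : Λ.s (A p) = Λ.r β), Λ.comp (A p) β hh = A q)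
    (q : NK k) (h : (0 : NK k) ≤ q) :
    (ofSystem A hd hext).seg 0 q h = A q := by
  obtain ⟨hh, hc⟩ := ofSystem_spec A hd hext 0 q h
  obtain ⟨w, hw⟩ := Λ.eq_ofObj_of_d_eq_zero (A 0) (hd 0)
  have hwr : w = Λ.r ((ofSystem A hd hext).seg 0 q h) := by
    rw [hw, Λ.s_ofObj] at hh; exact hh
  have hA0 : A 0 = Λ.ofObj (Λ.r ((ofSystem A hd hext).seg 0 q h)) := by rw [hw, hwr]
  have h' : Λ.s (Λ.ofObj (Λ.r ((ofSystem A hd hext).seg 0 q h)))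
      = Λ.r ((ofSystem A hd hext).seg 0 q h) := Λ.s_ofObj _
  calc (ofSystem A hd hext).seg 0 q h
      = Λ.comp (Λ.ofObj (Λ.r ((ofSystem A hd hext).seg 0 q h))) _ h' :=
        (Λ.ofObj_comp _ h').symm
    _ = Λ.comp (A 0) _ hh := (comp_congr' Λ hA0 _ _).symm
    _ = A q := hc

end Aux

section PathAt

/-- A chosen morphism of degree `(1,…,1)` with range `v`. -/
noncomputable def edge (Λ : KGraph k) (v : Λ.Obj) : Λ.Mor :=
  (Λ.no_sources v (fun _ => 1)).choose

lemma edge_r (Λ : KGraph k) (v : Λ.Obj) : Λ.r (edge Λ v) = v :=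
  (Λ.no_sources v (fun _ => 1)).choose_spec.1

lemma edge_d (Λ : KGraph k) (v : Λ.Obj) : Λ.d (edge Λ v) = fun _ => 1 :=
  (Λ.no_sources v (fun _ => 1)).choose_spec.2

/-- An iterated extension of `v` by chosen edges. -/
noncomputable def FF (Λ : KGraph k) (v : Λ.Obj) : ℕ → Λ.Mor
  | 0 => Λ.ofObj v
  | n + 1 => Λ.comp (FF Λ v n) (edge Λ (Λ.s (FF Λ v n))) (edge_r Λ _).symm

lemma FF_d (Λ : KGraph k) (v : Λ.Obj) (n : ℕ) : Λ.d (FF Λ v n) = fun _ => n := by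
  induction n with
  | zero => rw [show FF Λ v 0 = Λ.ofObj v from rfl, Λ.d_ofObj]; rfl
  | succ n ih =>
    show Λ.d (Λ.comp _ _ _) = _
    rw [Λ.d_comp, ih, edge_d]
    funext i; simp [Pi.add_apply]

lemma FF_r (Λ : KGraph k) (v : Λ.Obj) (n : ℕ) : Λ.r (FF Λ v n) = v := by
  induction n with
  | zero => exact Λ.r_ofObj v
  | succ n ih => show Λ.r (Λ.comp _ _ _) = _; rw [Λ.r_comp, ih]

lemma FF_ext (Λ : KGraph k) (v : Λ.Obj) (n d : ℕ) :
    ∃ (β : Λ.Mor) (hh : Λ.s (FF Λ v n) = Λ.r β), Λ.comp (FF Λ v n) β hh = FF Λ v (n + d) := by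
  induction d with
  | zero => exact ⟨Λ.ofObj (Λ.s (FF Λ v n)), (Λ.r_ofObj _).symm, Λ.comp_ofObj _ _⟩
  | succ d ih =>
    obtain ⟨β, hh, hc⟩ := ih
    have hsβ : Λ.s β = Λ.r (edge Λ (Λ.s (FF Λ v (n + d)))) := by
      rw [edge_r]
      have := Λ.s_comp (FF Λ v n) β hh
      rw [hc] at this
      exact this.symm
    refine ⟨Λ.comp β (edge Λ (Λ.s (FF Λ v (n + d)))) hsβ,
      hh.trans (Λ.r_comp _ _ _).symm, ?_⟩
    rw [← Λ.comp_assoc (FF Λ v n) β _ hh hsβ]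
    show Λ.comp (Λ.comp (FF Λ v n) β hh) _ _ = Λ.comp (FF Λ v (n+d)) _ _
    exact comp_congr' Λ hc _ _

/-- The left factor of degree `p` of `FF Λ v n`. -/
noncomputable def lf (Λ : KGraph k) (v : Λ.Obj) (n : ℕ) (p : NK k) (hp : ∀ i, p i ≤ n) :
    Λ.Mor :=
  (Λ.factor_exists (FF Λ v n) p (fun i => n - p i)
    (by rw [FF_d]; funext i; simp only [Pi.add_apply]; have := hp i; omega)).choose

lemma lf_spec (Λ : KGraph k) (v : Λ.Obj) (n : ℕ) (p : NK k) (hp : ∀ i, p i ≤ n) :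
    ∃ (β : Λ.Mor) (h : Λ.s (lf Λ v n p hp) = Λ.r β),
      Λ.d (lf Λ v n p hp) = p ∧ Λ.d β = (fun i => n - p i) ∧
      Λ.comp (lf Λ v n p hp) β h = FF Λ v n :=
  (Λ.factor_exists (FF Λ v n) p (fun i => n - p i)
    (by rw [FF_d]; funext i; simp only [Pi.add_apply]; have := hp i; omega)).choose_spec

lemma lf_d (Λ : KGraph k) (v : Λ.Obj) (n : ℕ) (p : NK k) (hp : ∀ i, p i ≤ n) :
    Λ.d (lf Λ v n p hp) = p := by
  obtain ⟨β, h, h1, _, _⟩ := lf_spec Λ v n p hp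
  exact h1

lemma lf_indep (Λ : KGraph k) (v : Λ.Obj) (n m : ℕ) (p : NK k) (hpn : ∀ i, p i ≤ n)
    (hpm : ∀ i, p i ≤ m) (hnm : n ≤ m) : lf Λ v n p hpn = lf Λ v m p hpm := by
  obtain ⟨d', rfl⟩ : ∃ d', m = n + d' := ⟨m - n, by omega⟩
  obtain ⟨γ, hγ, hcγ⟩ := FF_ext Λ v n d'
  obtain ⟨β, hβ, hd1, _, hc⟩ := lf_spec Λ v n p hpn
  obtain ⟨β', hβ', hd1', _, hc'⟩ := lf_spec Λ v (n + d') p hpm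
  have hsβγ : Λ.s β = Λ.r γ := by
    have := Λ.s_comp (lf Λ v n p hpn) β hβ
    rw [hc] at this
    exact this.symm.trans hγ
  have e1 : Λ.comp (Λ.comp (lf Λ v n p hpn) β hβ) γ ((Λ.s_comp _ _ _).trans hsβγ)
      = FF Λ v (n + d') := (comp_congr' Λ hc _ hγ).trans hcγ
  have e2 := (Λ.comp_assoc _ _ _ hβ hsβγ).symm.trans e1
  exact (Λ.factor_unique _ _ _ _ _ _ (hd1.trans hd1'.symm) (e2.trans hc'.symm)).1

/-- `NN p` is an upper bound for all coordinates of `p`. -/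
def NN (p : NK k) : ℕ := Finset.univ.sup p

lemma le_NN (p : NK k) (i : Fin k) : p i ≤ NN p := Finset.le_sup (Finset.mem_univ i)

/-- The initial-segment system of the chosen infinite path at `v`. -/
noncomputable def Apath (Λ : KGraph k) (v : Λ.Obj) (p : NK k) : Λ.Mor :=
  lf Λ v (NN p) p (le_NN p)

lemma Apath_d (Λ : KGraph k) (v : Λ.Obj) (p : NK k) : Λ.d (Apath Λ v p) = p :=
  lf_d Λ v (NN p) p (le_NN p)

lemma Apath_ext (Λ : KGraph k) (v : Λ.Obj) (p q : NK k) (h : p ≤ q) :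
    ∃ (β : Λ.Mor) (hh : Λ.s (Apath Λ v p) = Λ.r β),
      Λ.comp (Apath Λ v p) β hh = Apath Λ v q := by
  have hpq : ∀ i, p i ≤ NN q := fun i => (h i).trans (le_NN q i)
  have hA : Apath Λ v p = lf Λ v (NN q) p hpq := by
    rcases le_total (NN p) (NN q) with hle | hle
    · exact lf_indep Λ v (NN p) (NN q) p (le_NN p) hpq hle
    · exact (lf_indep Λ v (NN q) (NN p) p hpq (le_NN p) hle).symm
  obtain ⟨ρ, hρ, hdp, hdρ, hcρ⟩ := lf_spec Λ v (NN q) p hpq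
  obtain ⟨ρ', hρ', hdq, _, hcρ'⟩ := lf_spec Λ v (NN q) q (le_NN q)
  obtain ⟨β, γ, hβγ, hdβ, hdγ, hcβγ⟩ := Λ.factor_exists ρ (fun i => q i - p i)
    (fun i => NN q - q i)
    (by rw [hdρ]; funext i; simp only [Pi.add_apply]; beta_reduce
        have h1 : p i ≤ q i := h i
        have h2 := hpq i; have h3 := le_NN q i; omega)
  have hrβ : Λ.s (lf Λ v (NN q) p hpq) = Λ.r β := by
    rw [hρ, ← hcβγ, Λ.r_comp]
  have hsc : Λ.s (Λ.comp (lf Λ v (NN q) p hpq) β hrβ) = Λ.r γ := by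
    rw [Λ.s_comp]; exact hβγ
  have e1 : Λ.comp (Λ.comp (lf Λ v (NN q) p hpq) β hrβ) γ hsc = FF Λ v (NN q) :=
    (Λ.comp_assoc _ _ _ hrβ hβγ).trans ((Λ.comp_congr hcβγ _ hρ).trans hcρ)
  have hdcomp : Λ.d (Λ.comp (lf Λ v (NN q) p hpq) β hrβ)
      = Λ.d (lf Λ v (NN q) q (le_NN q)) := by
    rw [Λ.d_comp, hdp, hdβ, hdq]
    funext i; simp only [Pi.add_apply]; beta_reduce
    have h1 : p i ≤ q i := h i; omega
  have hkey := (Λ.factor_unique _ _ _ _ hsc hρ' hdcomp (e1.trans hcρ'.symm)).1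
  rw [hA]
  exact ⟨β, hrβ, hkey⟩

/-- A chosen infinite path based at `v`. -/
noncomputable def pathAt (Λ : KGraph k) (v : Λ.Obj) : InfPath Λ :=
  ofSystem (Apath Λ v) (Apath_d Λ v) (Apath_ext Λ v)

lemma Apath_zero (Λ : KGraph k) (v : Λ.Obj) : Apath Λ v 0 = Λ.ofObj v := by
  obtain ⟨w, hw⟩ := Λ.eq_ofObj_of_d_eq_zero (Apath Λ v 0) (Apath_d Λ v 0)
  obtain ⟨β, hβ, _, _, hc⟩ := lf_spec Λ v (NN 0) 0 (le_NN 0)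
  have hr : Λ.r (Apath Λ v 0) = v := by
    have := Λ.r_comp (lf Λ v (NN 0) 0 (le_NN 0)) β hβ
    rw [hc, FF_r] at this
    exact this.symm
  rw [hw, Λ.r_ofObj] at hr
  rw [hw, hr]

lemma pathAt_zero (Λ : KGraph k) (v : Λ.Obj) (h : (0 : NK k) ≤ 0) :
    (pathAt Λ v).seg 0 0 h = Λ.ofObj v := by
  rw [show (pathAt Λ v).seg 0 0 h = Apath Λ v 0 from
    ofSystem_seg_zero (Apath Λ v) (Apath_d Λ v) (Apath_ext Λ v) 0 h, Apath_zero]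

end PathAt

section Concat

variable (Λ) in
lemma r_seg_zero (x : InfPath Λ) (q : NK k) :
    Λ.r (x.seg 0 q (le0 q)) = Λ.s (x.seg 0 0 le_rfl) :=
  (x.src_seg 0 0 q le_rfl (le0 q)).symm

variable {μ : Λ.Mor} {x : InfPath Λ}

lemma concat_comp (hx : x.seg 0 0 le_rfl = Λ.ofObj (Λ.s μ)) (q : NK k) :
    Λ.s μ = Λ.r (x.seg 0 q (le0 q)) := by
  rw [r_seg_zero, hx, Λ.s_ofObj]

/-- `C q = μ · x(0,q)`. -/
noncomputable def CC (μ : Λ.Mor) (x : InfPath Λ)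
    (hx : x.seg 0 0 le_rfl = Λ.ofObj (Λ.s μ)) (q : NK k) : Λ.Mor :=
  Λ.comp μ (x.seg 0 q (le0 q)) (concat_comp hx q)

lemma CC_d (hx : x.seg 0 0 le_rfl = Λ.ofObj (Λ.s μ)) (q : NK k) :
    Λ.d (CC μ x hx q) = q + Λ.d μ := by
  unfold CC
  rw [Λ.d_comp, x.d_seg]
  funext i; simp only [Pi.add_apply, Pi.zero_apply]; beta_reduce; omega

/-- The initial-segment system of the concatenation `μx`. -/
noncomputable def concA (μ : Λ.Mor) (x : InfPath Λ)
    (hx : x.seg 0 0 le_rfl = Λ.ofObj (Λ.s μ)) (q : NK k) : Λ.Mor :=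
  (Λ.factor_exists (CC μ x hx q) q (Λ.d μ) (CC_d hx q)).choose

lemma concA_spec (hx : x.seg 0 0 le_rfl = Λ.ofObj (Λ.s μ)) (q : NK k) :
    ∃ (β : Λ.Mor) (h : Λ.s (concA μ x hx q) = Λ.r β),
      Λ.d (concA μ x hx q) = q ∧ Λ.d β = Λ.d μ ∧
      Λ.comp (concA μ x hx q) β h = CC μ x hx q :=
  (Λ.factor_exists (CC μ x hx q) q (Λ.d μ) (CC_d hx q)).choose_spec

lemma concA_d (hx : x.seg 0 0 le_rfl = Λ.ofObj (Λ.s μ)) (q : NK k) :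
    Λ.d (concA μ x hx q) = q := by
  obtain ⟨β, h, h1, _, _⟩ := concA_spec hx q
  exact h1

lemma CC_split (hx : x.seg 0 0 le_rfl = Λ.ofObj (Λ.s μ)) {p q : NK k} (h : p ≤ q) :
    CC μ x hx q = Λ.comp (CC μ x hx p) (x.seg p q h)
      (by unfold CC; rw [Λ.s_comp]; exact x.src_seg 0 p q (le0 p) h) := by
  unfold CC
  rw [Λ.comp_assoc]
  exact Λ.comp_congr (x.comp_seg 0 p q (le0 p) h).symm _ _

lemma concA_ext (hx : x.seg 0 0 le_rfl = Λ.ofObj (Λ.s μ)) (p q : NK k) (h : p ≤ q) :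
    ∃ (β : Λ.Mor) (hh : Λ.s (concA μ x hx p) = Λ.r β),
      Λ.comp (concA μ x hx p) β hh = concA μ x hx q := by
  obtain ⟨ρp, hρp, hdp, hdρp, hcp⟩ := concA_spec hx p
  obtain ⟨ρq, hρq, hdq, hdρq, hcq⟩ := concA_spec hx q
  have hsρ : Λ.s ρp = Λ.r (x.seg p q h) := by
    have h1 := Λ.s_comp (concA μ x hx p) ρp hρp
    rw [hcp] at h1
    have h2 : Λ.s (CC μ x hx p) = Λ.r (x.seg p q h) := by
      unfold CC
      rw [Λ.s_comp]
      exact x.src_seg 0 p q (le0 p) h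
    exact h1.symm.trans h2
  -- CC q = comp (concA p) (comp ρp (x.seg p q))
  have e1 : Λ.comp (concA μ x hx p) (Λ.comp ρp (x.seg p q h) hsρ)
      (hρp.trans (Λ.r_comp _ _ _).symm) = CC μ x hx q := by
    refine (Λ.comp_assoc _ _ _ hρp hsρ).symm.trans ?_
    refine (comp_congr' Λ hcp _ _).trans (CC_split hx h).symm
  -- factor comp ρp (x.seg p q) as β·γ with d β = q - p
  obtain ⟨β, γ, hβγ, hdβ, hdγ, hcβγ⟩ := Λ.factor_exists (Λ.comp ρp (x.seg p q h) hsρ)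
    (fun i => q i - p i) (Λ.d μ)
    (by rw [Λ.d_comp, hdρp, x.d_seg]; funext i; simp only [Pi.add_apply]; beta_reduce
        have h1 : p i ≤ q i := h i; omega)
  have hrβ : Λ.s (concA μ x hx p) = Λ.r β := by
    rw [hρp]
    have hr := congrArg Λ.r hcβγ
    rw [Λ.r_comp, Λ.r_comp] at hr
    exact hr.symm
  have hsc : Λ.s (Λ.comp (concA μ x hx p) β hrβ) = Λ.r γ := by
    rw [Λ.s_comp]; exact hβγ
  have e2 : Λ.comp (Λ.comp (concA μ x hx p) β hrβ) γ hsc = CC μ x hx q :=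
    (Λ.comp_assoc _ _ _ hrβ hβγ).trans ((Λ.comp_congr hcβγ _ _).trans e1)
  have hdcomp : Λ.d (Λ.comp (concA μ x hx p) β hrβ) = Λ.d (concA μ x hx q) := by
    rw [Λ.d_comp, hdp, hdβ, hdq]
    funext i; simp only [Pi.add_apply]; beta_reduce
    have h1 : p i ≤ q i := h i; omega
  exact ⟨β, hrβ, (Λ.factor_unique _ _ _ _ hsc hρq hdcomp (e2.trans hcq.symm)).1⟩

/-- The concatenation `μx` as an infinite path. -/
noncomputable def concat (μ : Λ.Mor) (x : InfPath Λ)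
    (hx : x.seg 0 0 le_rfl = Λ.ofObj (Λ.s μ)) : InfPath Λ :=
  ofSystem (concA μ x hx) (concA_d hx) (concA_ext hx)

lemma concA_add (hx : x.seg 0 0 le_rfl = Λ.ofObj (Λ.s μ)) (m : NK k) :
    concA μ x hx (Λ.d μ + m) = Λ.comp μ (x.seg 0 m (le0 m)) (concat_comp hx m) := by
  obtain ⟨ρ, hρ, hdA, hdρ, hc⟩ := concA_spec hx (Λ.d μ + m)
  have hm : m ≤ Λ.d μ + m := fun i => Nat.le_add_left _ _
  have e1 : Λ.comp (Λ.comp μ (x.seg 0 m (le0 m)) (concat_comp hx m))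
      (x.seg m (Λ.d μ + m) hm)
      (by rw [Λ.s_comp]; exact x.src_seg 0 m _ (le0 m) hm) = CC μ x hx (Λ.d μ + m) := by
    refine Eq.trans ?_ (CC_split hx hm).symm
    rfl
  have hdcomp : Λ.d (Λ.comp μ (x.seg 0 m (le0 m)) (concat_comp hx m))
      = Λ.d (concA μ x hx (Λ.d μ + m)) := by
    rw [Λ.d_comp, x.d_seg, hdA]
    funext i; simp only [Pi.add_apply, Pi.zero_apply]; beta_reduce; omega
  exact (Λ.factor_unique _ _ _ _ _ hρ hdcomp (e1.trans hc.symm)).1.symm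

lemma isConcat_concat (hx : x.seg 0 0 le_rfl = Λ.ofObj (Λ.s μ)) :
    IsConcat Λ μ x (concat μ x hx) := by
  refine ⟨hx, ?_, ?_⟩
  · have hz : (concat μ x hx).seg 0 (Λ.d μ) (le0 _) = concA μ x hx (Λ.d μ) :=
      ofSystem_seg_zero (concA μ x hx) (concA_d hx) (concA_ext hx) (Λ.d μ) (le0 _)
    have h0 : concA μ x hx (Λ.d μ) = concA μ x hx (Λ.d μ + 0) := rfl
    rw [hz, h0, concA_add hx 0]
    have : Λ.comp μ (x.seg 0 0 (le0 0)) (concat_comp hx 0)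
        = Λ.comp μ (Λ.ofObj (Λ.s μ)) (by rw [Λ.r_ofObj]) :=
      Λ.comp_congr hx _ _
    rw [this, Λ.comp_ofObj]
  · intro m n h
    obtain ⟨hh, hc⟩ := ofSystem_spec (concA μ x hx) (concA_d hx) (concA_ext hx)
      (Λ.d μ + m) (Λ.d μ + n) (add_le_add_right h _)
    have hh2 : Λ.s (Λ.comp μ (x.seg 0 m (le0 m)) (concat_comp hx m))
        = Λ.r ((concat μ x hx).seg (Λ.d μ + m) (Λ.d μ + n) (add_le_add_right h _)) := by
      rw [← concA_add hx m]; exact hh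
    have hsμx : Λ.s (x.seg 0 m (le0 m))
        = Λ.r ((concat μ x hx).seg (Λ.d μ + m) (Λ.d μ + n) (add_le_add_right h _)) := by
      rw [← Λ.s_comp μ (x.seg 0 m (le0 m)) (concat_comp hx m)]; exact hh2
    have e0 : Λ.comp (Λ.comp μ (x.seg 0 m (le0 m)) (concat_comp hx m)) _ hh2
        = Λ.comp μ (x.seg 0 n (le0 n)) (concat_comp hx n) :=
      ((comp_congr' Λ (concA_add hx m) hh hh2).symm.trans hc).trans (concA_add hx n)
    have e1 : Λ.comp μ (Λ.comp (x.seg 0 m (le0 m)) _ hsμx)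
        ((concat_comp hx m).trans (Λ.r_comp _ _ _).symm)
        = Λ.comp μ (x.seg 0 n (le0 n)) (concat_comp hx n) :=
      (Λ.comp_assoc _ _ _ (concat_comp hx m) hsμx).symm.trans e0
    have e2 := (Λ.factor_unique μ _ μ _ _ _ rfl e1).2
    have e3 := e2.trans (x.comp_seg 0 m n (le0 m) h).symm
    exact (Λ.factor_unique _ _ _ _ _ _ rfl e3).2

end Concat

section Shift

lemma isConcat_shift (Y : InfPath Λ) (p : NK k) :
    IsConcat Λ (Y.seg 0 p (le0 p)) (Y.shift p) Y := by
  have hd : Λ.d (Y.seg 0 p (le0 p)) = p := by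
    rw [Y.d_seg]; funext i; simp
  refine ⟨?_, ?_, ?_⟩
  · exact (seg_congr Y (zero_add p) (zero_add p) _ le_rfl).trans (seg_pp Y p le_rfl)
  · exact seg_congr Y rfl hd _ (le0 p)
  · intro m n h
    exact seg_congr Y (by rw [hd, add_comm]) (by rw [hd, add_comm]) _
      (add_le_add_left h p)

end Shift

section OpenSets

lemma open_basis' (U : Set (InfPath Λ))
    (hU : TopologicalSpace.GenerateOpen {V | ∃ μ : Λ.Mor, V = cylinder Λ μ} U) :
    ∀ z ∈ U, ∃ n : NK k, ∀ y : InfPath Λ,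
      y.seg 0 n (le0 n) = z.seg 0 n (le0 n) → y ∈ U := by
  induction hU with
  | basic V hV =>
    obtain ⟨μ, rfl⟩ := hV
    intro z hz
    refine ⟨Λ.d μ, fun y hy => ?_⟩
    show y.seg 0 (Λ.d μ) (le0 _) = μ
    exact hy.trans hz
  | univ => exact fun z _ => ⟨0, fun y _ => trivial⟩
  | inter U V _ _ ihU ihV =>
    rintro z ⟨hzU, hzV⟩
    obtain ⟨n₁, h₁⟩ := ihU z hzU
    obtain ⟨n₂, h₂⟩ := ihV z hzV
    refine ⟨n₁ ⊔ n₂, fun y hy => ⟨?_, ?_⟩⟩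
    · exact h₁ y (seg_det le_sup_left hy)
    · exact h₂ y (seg_det le_sup_right hy)
  | sUnion S _ ih =>
    rintro z ⟨V, hVS, hzV⟩
    obtain ⟨n, hn⟩ := ih V hVS z hzV
    exact ⟨n, fun y hy => ⟨V, hVS, hn y hy⟩⟩

lemma open_basis {U : Set (InfPath Λ)} (hU : IsOpen U) {z : InfPath Λ} (hz : z ∈ U) :
    ∃ n : NK k, ∀ y : InfPath Λ,
      y.seg 0 n (le0 n) = z.seg 0 n (le0 n) → y ∈ U :=
  open_basis' U hU z hz

end OpenSets

/-- for a pseudo free action, the only open invariant subsets of `Λ^∞` are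
`∅` and `Λ^∞` iff `Λ` is `G`-cofinal (minimality of the self-similar path groupoid). -/
theorem stmt15 {k : ℕ} (hk : 0 < k) (G : Type) [Group G] [Countable G]
    (Λ : KGraph k) (S : SelfSimilar k G Λ) (hpf : S.PseudoFree) :
    (∀ U : Set (InfPath Λ), IsOpen U → InvariantSet S U → U = ∅ ∨ U = Set.univ) ↔
      GCofinal S := by
  constructor
  · -- minimality → cofinality
    intro H x v
    set U : Set (InfPath Λ) := {y | ∃ (p : NK k) (μ : Λ.Mor) (g : G),
      Λ.ofObj (Λ.s μ) = y.seg p p le_rfl ∧ Λ.r μ = S.actV g v} with hUdef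
    have hopen : IsOpen U := by
      have hUU : U = ⋃₀ {V | (∃ μ : Λ.Mor, V = cylinder Λ μ) ∧ V ⊆ U} := by
        apply Set.eq_of_subset_of_subset
        · rintro y ⟨p, μ, g, hs, hr⟩
          refine ⟨cylinder Λ (y.seg 0 p (le0 p)), ⟨⟨_, rfl⟩, ?_⟩, ?_⟩
          · rintro y' hy'
            have hd : Λ.d (y.seg 0 p (le0 p)) = p := by rw [y.d_seg]; funext i; simp
            have h1 : y'.seg 0 p (le0 p) = y.seg 0 p (le0 p) :=
              (seg_congr y' rfl hd.symm (le0 p) (le0 _)).trans hy'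
            refine ⟨p, μ, g, ?_, hr⟩
            rw [seg_pp y' p le_rfl, h1, ← seg_pp y p le_rfl]
            exact hs
          · show y.seg 0 (Λ.d (y.seg 0 p (le0 p))) (le0 _) = y.seg 0 p (le0 p)
            exact seg_congr y rfl (by rw [y.d_seg]; funext i; simp) _ _
        · rintro y ⟨V, ⟨_, hVU⟩, hyV⟩
          exact hVU hyV
      rw [hUU]
      exact isOpen_sUnion fun V hV => TopologicalSpace.GenerateOpen.basic V hV.1
    have hinv : InvariantSet S U := by
      rintro g μ ν x' z y hsa hcz hcy ⟨p, μ₀, g₀, hw1, hw2⟩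
      have hpq : p ≤ Λ.d ν + p := fun i => Nat.le_add_left _ _
      have hs1 : Λ.s μ₀ = Λ.r (z.seg p (Λ.d ν + p) hpq) := by
        have h1 : Λ.s μ₀ = Λ.s (z.seg 0 p (le0 p)) := by
          apply ofObj_inj
          rw [hw1]
          exact seg_pp z p le_rfl
        rw [h1]
        exact z.src_seg 0 p _ (le0 p) hpq
      refine ⟨Λ.d μ + p, S.act (S.res g (x'.seg 0 p (le0 p)))
        (Λ.comp μ₀ (z.seg p (Λ.d ν + p) hpq) hs1),
        S.res g (x'.seg 0 p (le0 p)) * g₀, ?_, ?_⟩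
      · have hy1 : y.seg (Λ.d μ + p) (Λ.d μ + p) le_rfl
            = S.act (S.res g (x'.seg 0 p (le0 p))) (x'.seg p p le_rfl) :=
          hcy.2.2 p p le_rfl
        have hx1 : x'.seg p p le_rfl
            = Λ.ofObj (Λ.s (Λ.comp μ₀ (z.seg p (Λ.d ν + p) hpq) hs1)) := by
          have h2 : x'.seg p p le_rfl = z.seg (Λ.d ν + p) (Λ.d ν + p) le_rfl :=
            (hcz.2.2 p p le_rfl).symm
          rw [h2, seg_pp z _ le_rfl]
          congr 1
          have h3 := z.comp_seg 0 p (Λ.d ν + p) (le0 p) hpq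
          have h4 := Λ.s_comp (z.seg 0 p (le0 p)) (z.seg p (Λ.d ν + p) hpq)
            (z.src_seg 0 p _ (le0 p) hpq)
          rw [h3] at h4
          rw [h4, Λ.s_comp]
        rw [hy1, hx1, S.act_ofObj_s]
      · rw [r_act, Λ.r_comp, hw2, ← actV_mul]
    have hne : (pathAt Λ v) ∈ U := by
      refine ⟨0, Λ.ofObj v, 1, ?_, ?_⟩
      · rw [Λ.s_ofObj, pathAt_zero]
      · rw [Λ.r_ofObj, actV_one]
    rcases H U hopen hinv with h0 | h0
    · rw [h0] at hne
      exact absurd hne (Set.notMem_empty _)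
    · have hx : x ∈ U := by rw [h0]; trivial
      exact hx
  · -- cofinality → minimality
    intro hcof U hopen hinv
    rcases Set.eq_empty_or_nonempty U with h | ⟨z₀, hz₀⟩
    · exact Or.inl h
    right
    obtain ⟨n₀, hn₀⟩ := open_basis hopen hz₀
    apply Set.eq_univ_of_forall
    intro Y
    obtain ⟨p, μ, g, hμs, hμr⟩ := hcof Y (Λ.s (z₀.seg 0 n₀ (le0 n₀)))
    have hcompν : Λ.s (z₀.seg 0 n₀ (le0 n₀)) = Λ.r (S.act g⁻¹ μ) := by
      rw [r_act, hμr, ← actV_mul, inv_mul_cancel, actV_one]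
    set ν : Λ.Mor := Λ.comp (z₀.seg 0 n₀ (le0 n₀)) (S.act g⁻¹ μ) hcompν with hν
    clear_value ν
    have hx0 : (S.actInf g⁻¹ (Y.shift p)).seg 0 0 le_rfl = Λ.ofObj (Λ.s ν) := by
      rw [hν, Λ.s_comp]
      show S.act (S.res g⁻¹ ((Y.shift p).seg 0 0 (le0 0))) ((Y.shift p).seg 0 0 (le0 0))
        = Λ.ofObj (Λ.s (S.act g⁻¹ μ))
      have hYpp : (Y.shift p).seg 0 0 (le0 0) = Λ.ofObj (Λ.s μ) :=
        (seg_congr Y (zero_add p) (zero_add p) _ le_rfl).trans hμs.symm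
      rw [hYpp, S.res_ofObj, S.act_ofObj_s]
    have hdν : n₀ ≤ Λ.d ν := by
      have hd := Λ.d_comp (z₀.seg 0 n₀ (le0 n₀)) (S.act g⁻¹ μ) hcompν
      rw [← hν, z₀.d_seg] at hd
      refine Pi.le_def.mpr fun i => ?_
      have h5 := congrFun hd i
      simp only [Pi.add_apply, Pi.zero_apply] at h5
      beta_reduce at h5
      omega
    have hzU : concat ν (S.actInf g⁻¹ (Y.shift p)) hx0 ∈ U := by
      apply hn₀
      have hsegν : (concat ν (S.actInf g⁻¹ (Y.shift p)) hx0).seg 0 (Λ.d ν) (le0 _) = ν :=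
        (isConcat_concat hx0).2.1
      have hsplit := (concat ν (S.actInf g⁻¹ (Y.shift p)) hx0).comp_seg 0 n₀ (Λ.d ν)
        (le0 n₀) hdν
      have e := hsplit.trans (hsegν.trans hν)
      refine (Λ.factor_unique _ _ _ _ _ hcompν ?_ e).1
      rw [(concat ν (S.actInf g⁻¹ (Y.shift p)) hx0).d_seg, z₀.d_seg]
    have hsY : Λ.s (Y.seg 0 p (le0 p)) = S.actV g (Λ.s ν) := by
      have h1 : Λ.s ν = S.actV g⁻¹ (Λ.s μ) := by rw [hν, Λ.s_comp, s_act]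
      rw [h1, ← actV_mul, mul_inv_cancel, actV_one]
      apply ofObj_inj
      rw [← seg_pp Y p le_rfl]
      exact hμs.symm
    have hcY : IsConcat Λ (Y.seg 0 p (le0 p))
        (S.actInf g (S.actInf g⁻¹ (Y.shift p))) Y := by
      rw [actInf_inv_cancel S g (Y.shift p)]
      exact isConcat_shift Y p
    exact hinv g (Y.seg 0 p (le0 p)) ν (S.actInf g⁻¹ (Y.shift p))
      (concat ν (S.actInf g⁻¹ (Y.shift p)) hx0) Y hsY (isConcat_concat hx0) hcY hzU

end SSKG
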